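/- Let γ > 2 and δ < 2/(γ-2), and let α, β be reals with 0 < |α| ≤ |β| such that ‖n α/β‖ ≥ c₀ |n|^{-1-δ} for all nonzero integers n, where ‖x‖ denotes the distance from x to the nearest integer. Then the sum Σ over integer pairs (m,n) with 0 < |−βm + αn| < 1/2 of |−βm+αn|^{-(γ-2)/(γ-1)} |αm+βn|^{-1/(γ-1)-2} is finite. -/

import Mathlib

open Real Set
set_option maxHeartbeats 2000000

theorem stmt_14 (γ δ α β c₀ : ℝ) (hγ : 2 < γ) (hδ : δ < 2 / (γ - 2))
    (hα : 0 < |α|) (hαβ : |α| ≤ |β|) (hc₀ : 0 < c₀)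
    (hdio : ∀ n : ℤ, n ≠ 0 →
      c₀ * |(n : ℝ)| ^ (-1 - δ) ≤ |(n : ℝ) * (α / β) - round ((n : ℝ) * (α / β))|) :
    Summable (fun p : {q : ℤ × ℤ //
        0 < |(-β) * (q.1 : ℝ) + α * (q.2 : ℝ)| ∧ |(-β) * (q.1 : ℝ) + α * (q.2 : ℝ)| < 1 / 2} =>
      |(-β) * (p.1.1 : ℝ) + α * (p.1.2 : ℝ)| ^ (-(γ - 2) / (γ - 1)) *
      |α * (p.1.1 : ℝ) + β * (p.1.2 : ℝ)| ^ (-(1 / (γ - 1)) - 2)) := by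
  have hβ : 0 < |β| := lt_of_lt_of_le hα hαβ
  have hβ0 : β ≠ 0 := abs_pos.mp hβ
  have hα0 : α ≠ 0 := abs_pos.mp hα
  have hγ1 : 0 < γ - 1 := by linarith
  have hγ2 : 0 < γ - 2 := by linarith
  set e₁ : ℝ := -(γ - 2) / (γ - 1) with he₁def
  set e₂ : ℝ := -(1 / (γ - 1)) - 2 with he₂def
  set s : ℝ := (-1 - δ) * e₁ + e₂ with hsdef
  set A : ℝ := α ^ 2 + β ^ 2 with hAdef
  have hA : 0 < A := by rw [hAdef]; positivity
  set M : ℝ := |α| / A with hMdef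
  have hM : 0 ≤ M := by rw [hMdef]; positivity
  set C : ℝ := (c₀ * |β|) ^ e₁ * (A / (2 * |β|)) ^ e₂ with hCdef
  have hC : 0 < C := by
    rw [hCdef]
    exact mul_pos (Real.rpow_pos_of_pos (by positivity) _)
      (Real.rpow_pos_of_pos (by positivity) _)
  set k : ℤ → ℤ := fun n => round ((n : ℝ) * (α / β)) with hkdef
  set K : ℤ := ⌈1 / (2 * |β|) + 1 / 2⌉ with hKdef
  clear_value e₁ e₂ s A M C K
  have he₁ : e₁ ≤ 0 := by
    rw [he₁def, neg_div]
    exact neg_nonpos.mpr (by positivity)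
  have he₂ : e₂ ≤ 0 := by
    rw [he₂def]
    have : (0:ℝ) ≤ 1 / (γ - 1) := by positivity
    linarith
  have hs : s < -1 := by
    have h2 : δ * (γ - 2) < 2 := (lt_div_iff₀ hγ2).mp hδ
    have hre : s = ((-1 - δ) * (-(γ - 2)) + (-1 - 2 * (γ - 1))) / (γ - 1) := by
      rw [hsdef, he₁def, he₂def]; field_simp
    rw [hre, div_lt_iff₀ hγ1]
    nlinarith
  set F : ℤ × ℤ → ℝ := fun q =>
    |(-β) * (q.1 : ℝ) + α * (q.2 : ℝ)| ^ e₁ * |α * (q.1 : ℝ) + β * (q.2 : ℝ)| ^ e₂ with hFdef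
  set S : Set (ℤ × ℤ) := {q : ℤ × ℤ |
    0 < |(-β) * (q.1 : ℝ) + α * (q.2 : ℝ)| ∧ |(-β) * (q.1 : ℝ) + α * (q.2 : ℝ)| < 1 / 2}
    with hSdef
  set g : ℤ × ℤ → ℝ := fun q => if |q.1 - k q.2| ≤ K then C * |(q.2 : ℝ)| ^ s else 0 with hgdef
  set B : Set (ℤ × ℤ) := {q : ℤ × ℤ | q ∈ S ∧ |(q.2 : ℝ)| ≤ M} with hBdef
  have hF0 : ∀ q, 0 ≤ F q := fun q =>
    mul_nonneg (Real.rpow_nonneg (abs_nonneg _) _) (Real.rpow_nonneg (abs_nonneg _) _)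
  have hg0 : ∀ q, 0 ≤ g q := by
    intro q
    rw [hgdef]
    dsimp only
    split
    · exact mul_nonneg hC.le (Real.rpow_nonneg (abs_nonneg _) _)
    · exact le_refl 0
  -- finiteness of the bad set
  have hBfin : B.Finite := by
    apply Set.Finite.subset (Set.finite_Icc
      ((-⌈(1 / 2 + |α| * M) / |β|⌉, -⌊M⌋) : ℤ × ℤ) (⌈(1 / 2 + |α| * M) / |β|⌉, ⌊M⌋))
    rintro ⟨m, n⟩ ⟨⟨hx0, hx2⟩, hn⟩
    have hnN : |n| ≤ ⌊M⌋ := by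
      rw [Int.le_floor]
      exact_mod_cast hn
    have hmN : |m| ≤ ⌈(1 / 2 + |α| * M) / |β|⌉ := by
      have h6 : |β| * |(m : ℝ)| ≤ 1 / 2 + |α| * M := by
        have e1 : β * (m : ℝ) = α * (n : ℝ) + -((-β) * (m : ℝ) + α * (n : ℝ)) := by ring
        have h7 : |β * (m : ℝ)| ≤ |α * (n : ℝ)| + |(-β) * (m : ℝ) + α * (n : ℝ)| := by
          rw [e1]
          exact (abs_add_le _ _).trans (by rw [abs_neg])
        rw [abs_mul, abs_mul] at h7
        nlinarith [abs_nonneg α, mul_le_mul_of_nonneg_left hn (abs_nonneg α)]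
      have h8 : |(m : ℝ)| ≤ (1 / 2 + |α| * M) / |β| := by
        rw [le_div_iff₀ hβ]
        nlinarith
      exact_mod_cast h8.trans (Int.le_ceil _)
    simp only [Set.mem_Icc, Prod.mk_le_mk]
    obtain ⟨hm1, hm2⟩ := abs_le.mp hmN
    obtain ⟨hn1, hn2⟩ := abs_le.mp hnN
    exact ⟨⟨hm1, hn1⟩, hm2, hn2⟩
  -- summability of the comparison function
  have hgsum : Summable g := by
    have hsum1 : Summable (fun j : ℤ => if |j| ≤ K then C else 0) := by
      apply summable_of_ne_finset_zero (s := Finset.Icc (-K) K)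
      intro j hj
      rw [if_neg]
      intro habs
      exact hj (Finset.mem_Icc.mpr (abs_le.mp habs))
    have hsum2 : Summable (fun n : ℤ => |(n : ℝ)| ^ s) := by
      have h := Real.summable_abs_int_rpow (b := -s) (by linarith)
      simpa using h
    have hprod : Summable (fun q : ℤ × ℤ => (if |q.1| ≤ K then C else 0) * |(q.2 : ℝ)| ^ s) := by
      apply Summable.mul_of_nonneg hsum1 hsum2
      · intro j
        dsimp only
        split
        · exact hC.le
        · exact le_rfl
      · intro n
        exact Real.rpow_nonneg (abs_nonneg _) _
    refine ((Equiv.mk (fun q : ℤ × ℤ => ((q.1 + k q.2, q.2) : ℤ × ℤ))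
      (fun q => (q.1 - k q.2, q.2)) (fun q => by simp) (fun q => by simp)).summable_iff).mp ?_
    refine hprod.congr fun q => ?_
    show (if |q.1| ≤ K then C else 0) * |(q.2 : ℝ)| ^ s = g (q.1 + k q.2, q.2)
    rw [hgdef]
    dsimp only
    rw [add_sub_cancel_right, ite_mul, zero_mul]
  -- the comparison
  have hcomp : ∀ q : ℤ × ℤ, q ∉ B → S.indicator F q ≤ g q := by
    intro q hqB
    by_cases hqS : q ∈ S
    · rw [Set.indicator_of_mem hqS]
      obtain ⟨m, n⟩ := q
      obtain ⟨hx0, hx2⟩ := hqS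
      have hn : M < |(n : ℝ)| := by
        by_contra h
        exact hqB ⟨⟨hx0, hx2⟩, not_lt.mp h⟩
      have hn' : 0 < |(n : ℝ)| := lt_of_le_of_lt hM hn
      have hn0 : n ≠ 0 := by
        intro h
        rw [h] at hn'
        simp at hn'
      have hxeq : (-β) * ((m : ℝ) - (n : ℝ) * (α / β)) = (-β) * (m : ℝ) + α * (n : ℝ) := by
        field_simp
        ring
      have h1 : c₀ * |β| * |(n : ℝ)| ^ (-1 - δ) ≤ |(-β) * (m : ℝ) + α * (n : ℝ)| := by
        have hrt := round_le ((n : ℝ) * (α / β)) m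
        have hdn := hdio n hn0
        calc c₀ * |β| * |(n : ℝ)| ^ (-1 - δ) = |β| * (c₀ * |(n : ℝ)| ^ (-1 - δ)) := by ring
          _ ≤ |β| * |(n : ℝ) * (α / β) - round ((n : ℝ) * (α / β))| :=
              mul_le_mul_of_nonneg_left hdn (abs_nonneg β)
          _ ≤ |β| * |(n : ℝ) * (α / β) - (m : ℝ)| :=
              mul_le_mul_of_nonneg_left hrt (abs_nonneg β)
          _ = |(-β) * ((m : ℝ) - (n : ℝ) * (α / β))| := by
              rw [abs_mul, abs_neg, abs_sub_comm]
          _ = _ := by rw [hxeq]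
      have h2 : A / (2 * |β|) * |(n : ℝ)| ≤ |α * (m : ℝ) + β * (n : ℝ)| := by
        have hkey : β * (α * (m : ℝ) + β * (n : ℝ)) =
            A * (n : ℝ) - α * ((-β) * (m : ℝ) + α * (n : ℝ)) := by
          rw [hAdef]; ring
        have h3 := abs_sub_abs_le_abs_sub (A * (n : ℝ)) (α * ((-β) * (m : ℝ) + α * (n : ℝ)))
        rw [← hkey, abs_mul, abs_mul, abs_mul, abs_of_pos hA] at h3
        have hαn : |α| < |(n : ℝ)| * A := by
          rw [hMdef] at hn
          exact (div_lt_iff₀ hA).mp hn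
        rw [div_mul_eq_mul_div, div_le_iff₀ (by positivity)]
        nlinarith [mul_le_mul_of_nonneg_left hx2.le (abs_nonneg α),
          abs_nonneg ((-β) * (m : ℝ) + α * (n : ℝ))]
      have hb1 : (0:ℝ) < c₀ * |β| * |(n : ℝ)| ^ (-1 - δ) :=
        mul_pos (mul_pos hc₀ hβ) (Real.rpow_pos_of_pos hn' _)
      have hb2 : (0:ℝ) < A / (2 * |β|) * |(n : ℝ)| := mul_pos (by positivity) hn'
      have t1 := Real.rpow_le_rpow_of_nonpos hb1 h1 he₁
      have t2 := Real.rpow_le_rpow_of_nonpos hb2 h2 he₂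
      have hmt : |β| * |(m : ℝ) - (n : ℝ) * (α / β)| < 1 / 2 := by
        calc |β| * |(m : ℝ) - (n : ℝ) * (α / β)|
            = |(-β) * ((m : ℝ) - (n : ℝ) * (α / β))| := by rw [abs_mul, abs_neg]
          _ < 1 / 2 := by rw [hxeq]; exact hx2
      have hj : |m - k n| ≤ K := by
        have hkt : |(n : ℝ) * (α / β) - ((k n : ℤ) : ℝ)| ≤ 1 / 2 := abs_sub_round _
        have htr : |((m - k n : ℤ) : ℝ)| ≤ 1 / (2 * |β|) + 1 / 2 := by
          push_cast
          calc |(m : ℝ) - ((k n : ℤ) : ℝ)|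
              ≤ |(m : ℝ) - (n : ℝ) * (α / β)| + |(n : ℝ) * (α / β) - ((k n : ℤ) : ℝ)| :=
                abs_sub_le _ _ _
            _ ≤ 1 / (2 * |β|) + 1 / 2 := by
                apply add_le_add _ hkt
                rw [le_div_iff₀ (by positivity)]
                nlinarith
        have h9 := htr.trans (Int.le_ceil _)
        rw [hKdef]
        exact_mod_cast h9
      have hgval : g (m, n) = C * |(n : ℝ)| ^ s := by
        rw [hgdef]
        dsimp only
        rw [if_pos hj]
      rw [hgval]
      have hFle : F (m, n) ≤
          (c₀ * |β| * |(n : ℝ)| ^ (-1 - δ)) ^ e₁ * (A / (2 * |β|) * |(n : ℝ)|) ^ e₂ := by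
        rw [hFdef]
        exact mul_le_mul t1 t2 (Real.rpow_nonneg (abs_nonneg _) _)
          (Real.rpow_nonneg hb1.le _)
      refine hFle.trans (le_of_eq ?_)
      rw [Real.mul_rpow (by positivity) (Real.rpow_nonneg (abs_nonneg _) _),
        Real.mul_rpow (x := A / (2 * |β|)) (y := |(n : ℝ)|) (by positivity) (abs_nonneg _),
        ← Real.rpow_mul (abs_nonneg ((n : ℝ)))]
      rw [hCdef, hsdef, Real.rpow_add hn']
      ring
    · rw [Set.indicator_of_notMem hqS]
      exact hg0 q
  have key : Summable (S.indicator F) := by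
    rw [← hBfin.summable_compl_iff]
    exact Summable.of_nonneg_of_le
      (fun q => Set.indicator_apply_nonneg (fun _ => hF0 _))
      (fun q => hcomp q.1 q.2)
      (hgsum.subtype _)
  exact summable_subtype_iff_indicator.mpr key
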